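/- For all rooted graphs F_R and G_S, the limit as ℓ → ∞ of the smallest eigenvalue of the path augmentation (F_R, ℓ, G_S) equals the minimum of lim_{ℓ→∞} λ₁(F_R, ℓ) and lim_{ℓ→∞} λ₁(G_S, ℓ). -/

import Mathlib

open Matrix Filter
open scoped Classical

noncomputable def adjM {α : Type*} [Fintype α] (G : SimpleGraph α) : Matrix α α ℝ :=
  fun x y => if G.Adj x y then 1 else 0

noncomputable def minEig {α : Type*} [Fintype α] (G : SimpleGraph α) : ℝ :=
  sInf {μ : ℝ | ∃ x : α → ℝ, x ≠ 0 ∧ adjM G *ᵥ x = μ • x}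

/-- The path extension `(F_R, ℓ)`: add a path `v_0 … v_ℓ` (vertices `Fin (ℓ+1)`) to `F`,
joining `v_0` to every vertex of the root set `R`. -/
def pathExt {V : Type*} (F : SimpleGraph V) (R : Set V) (ℓ : ℕ) :
    SimpleGraph (V ⊕ Fin (ℓ + 1)) :=
  SimpleGraph.fromRel (fun x y =>
    match x, y with
    | Sum.inl u, Sum.inl v => F.Adj u v
    | Sum.inl u, Sum.inr i => u ∈ R ∧ (i : ℕ) = 0
    | Sum.inr i, Sum.inr j => (j : ℕ) = (i : ℕ) + 1
    | _, _ => False)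

/-- The path augmentation `(F_R, ℓ, G_S)`: to the disjoint union of `F` and `G`, add a
path `v_0 … v_ℓ`, joining `v_0` to every vertex of `R` and `v_ℓ` to every vertex of `S`. -/
def pathAug {V W : Type*} (F : SimpleGraph V) (R : Set V) (G : SimpleGraph W) (S : Set W)
    (ℓ : ℕ) : SimpleGraph (V ⊕ W ⊕ Fin (ℓ + 1)) :=
  SimpleGraph.fromRel (fun x y =>
    match x, y with
    | Sum.inl u, Sum.inl v => F.Adj u v
    | Sum.inr (Sum.inl u), Sum.inr (Sum.inl v) => G.Adj u v
    | Sum.inl u, Sum.inr (Sum.inr i) => u ∈ R ∧ (i : ℕ) = 0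
    | Sum.inr (Sum.inl u), Sum.inr (Sum.inr i) => u ∈ S ∧ (i : ℕ) = ℓ
    | Sum.inr (Sum.inr i), Sum.inr (Sum.inr j) => (j : ℕ) = (i : ℕ) + 1
    | _, _ => False)

/-! ### Auxiliary spectral theory -/

section Spectral
variable {α : Type*} [Fintype α] [DecidableEq α]

/-- The set of eigenvalues. -/
def eigSet (A : Matrix α α ℝ) : Set ℝ := {μ : ℝ | ∃ x : α → ℝ, x ≠ 0 ∧ A *ᵥ x = μ • x}

lemma dot_mulVec_symm {A : Matrix α α ℝ} (hA : A.IsHermitian) (u v : α → ℝ) :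
    u ⬝ᵥ (A *ᵥ v) = (A *ᵥ u) ⬝ᵥ v := by
  rw [dotProduct_mulVec, ← Matrix.mulVec_transpose]
  have hT : Aᵀ = A := Matrix.ext (fun i j => by
    simpa [Matrix.conjTranspose_apply] using congrFun (congrFun hA i) j)
  rw [hT]

lemma dot_eigen {A : Matrix α α ℝ} (hA : A.IsHermitian) (i : α) (x : α → ℝ) :
    ⇑(hA.eigenvectorBasis i) ⬝ᵥ (A *ᵥ x)
      = hA.eigenvalues i * (⇑(hA.eigenvectorBasis i) ⬝ᵥ x) := by
  rw [dot_mulVec_symm hA, hA.mulVec_eigenvectorBasis i, smul_dotProduct]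
  rfl

lemma eig_mem {A : Matrix α α ℝ} (hA : A.IsHermitian) (i : α) :
    hA.eigenvalues i ∈ eigSet A := by
  refine ⟨hA.eigenvectorBasis i, ?_, hA.mulVec_eigenvectorBasis i⟩
  have := hA.eigenvectorBasis.orthonormal.ne_zero i
  exact fun h => this (by ext j; exact congrFun h j)

lemma eig_sub {A : Matrix α α ℝ} (hA : A.IsHermitian) {μ : ℝ} (hμ : μ ∈ eigSet A) :
    ∃ i, μ = hA.eigenvalues i := by
  obtain ⟨x, hx, hAx⟩ := hμ
  have hc : ∃ i, ⇑(hA.eigenvectorBasis i) ⬝ᵥ x ≠ 0 := by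
    by_contra h
    push_neg at h
    apply hx
    have h2 := hA.eigenvectorBasis.sum_repr' (WithLp.toLp 2 x)
    have h3 : ∀ i : α, (inner ℝ (hA.eigenvectorBasis i) (WithLp.toLp 2 x) : ℝ)
        • hA.eigenvectorBasis i = 0 := by
      intro i
      have : (inner ℝ (hA.eigenvectorBasis i) (WithLp.toLp 2 x) : ℝ)
          = ⇑(hA.eigenvectorBasis i) ⬝ᵥ x := by
        simp [PiLp.inner_apply, dotProduct, mul_comm]
      rw [this, h i, zero_smul]
    rw [Finset.sum_eq_zero (fun i _ => h3 i)] at h2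
    exact congrArg WithLp.ofLp h2.symm
  obtain ⟨i, hi⟩ := hc
  refine ⟨i, ?_⟩
  have h1 := dot_eigen hA i x
  have h2 : ⇑(hA.eigenvectorBasis i) ⬝ᵥ (A *ᵥ x)
      = μ * (⇑(hA.eigenvectorBasis i) ⬝ᵥ x) := by
    rw [hAx, dotProduct_smul]; rfl
  exact (mul_right_cancel₀ hi (h1.symm.trans h2)).symm

lemma eigSet_eq {A : Matrix α α ℝ} (hA : A.IsHermitian) :
    eigSet A = Set.range hA.eigenvalues := by
  ext μ
  constructor
  · intro h; obtain ⟨i, hi⟩ := eig_sub hA h; exact ⟨i, hi.symm⟩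
  · rintro ⟨i, rfl⟩; exact eig_mem hA i

lemma minEig_mem' {A : Matrix α α ℝ} (hA : A.IsHermitian) [Nonempty α] :
    sInf (eigSet A) ∈ eigSet A := by
  rw [eigSet_eq hA]
  exact (Set.range_nonempty _).csInf_mem (Set.finite_range _)

lemma minEig_le_eig {A : Matrix α α ℝ} (hA : A.IsHermitian) (i : α) :
    sInf (eigSet A) ≤ hA.eigenvalues i := by
  apply csInf_le _ (eig_mem hA i)
  rw [eigSet_eq hA]
  exact (Set.finite_range _).bddBelow

lemma inf_rayleigh {A : Matrix α α ℝ} (hA : A.IsHermitian) [Nonempty α] (x : α → ℝ) :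
    sInf (eigSet A) * (x ⬝ᵥ x) ≤ x ⬝ᵥ (A *ᵥ x) := by
  have expand : ∀ y : α → ℝ,
      x ⬝ᵥ y = ∑ i, (x ⬝ᵥ ⇑(hA.eigenvectorBasis i)) * (⇑(hA.eigenvectorBasis i) ⬝ᵥ y) := by
    intro y
    set x' : EuclideanSpace ℝ α := (WithLp.equiv 2 (α → ℝ)).symm x with hx'
    set y' : EuclideanSpace ℝ α := (WithLp.equiv 2 (α → ℝ)).symm y with hy'
    have h := hA.eigenvectorBasis.sum_inner_mul_inner x' y'
    have h1 : (inner ℝ x' y' : ℝ) = x ⬝ᵥ y := by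
      simp [PiLp.inner_apply, dotProduct, hx', hy', mul_comm]
    rw [h1] at h
    rw [← h]
    refine Finset.sum_congr rfl (fun i _ => ?_)
    congr 1
    all_goals simp [PiLp.inner_apply, dotProduct, hx', hy', mul_comm]
  have hAx : x ⬝ᵥ (A *ᵥ x) = ∑ i, hA.eigenvalues i * (⇑(hA.eigenvectorBasis i) ⬝ᵥ x)^2 := by
    rw [expand (A *ᵥ x)]
    refine Finset.sum_congr rfl (fun i _ => ?_)
    rw [dot_eigen hA i x, dotProduct_comm]
    ring
  have hxx : x ⬝ᵥ x = ∑ i, (⇑(hA.eigenvectorBasis i) ⬝ᵥ x)^2 := by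
    rw [expand x]
    exact Finset.sum_congr rfl (fun i _ => by rw [dotProduct_comm]; ring)
  rw [hAx, hxx, Finset.mul_sum]
  exact Finset.sum_le_sum (fun i _ =>
    mul_le_mul_of_nonneg_right (minEig_le_eig hA i) (sq_nonneg _))

end Spectral

/-! ### Generalities on sums and extensions -/

section GraphLayer
variable {α β : Type*} [Fintype α] [Fintype β]

lemma adjM_herm (G : SimpleGraph α) : (adjM G).IsHermitian := by
  refine Matrix.ext (fun i j => ?_)
  simp [adjM, Matrix.conjTranspose_apply, SimpleGraph.adj_comm]

lemma dot_self_nonneg' (x : α → ℝ) : 0 ≤ x ⬝ᵥ x :=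
  Finset.sum_nonneg (fun i _ => mul_self_nonneg _)

lemma dot_self_pos {x : α → ℝ} (hx : x ≠ 0) : 0 < x ⬝ᵥ x := by
  obtain ⟨i, hi⟩ := Function.ne_iff.mp hx
  exact Finset.sum_pos' (fun j _ => mul_self_nonneg _)
    ⟨i, Finset.mem_univ i, mul_self_pos.mpr (by simpa using hi)⟩

lemma sum_ext_range {f : α → β} (hf : Function.Injective f) (F : β → ℝ)
    (h : ∀ b, (∀ a, f a ≠ b) → F b = 0) : ∑ b, F b = ∑ a, F (f a) := by
  rw [← Finset.sum_image (g := f) (f := F) (fun x _ y _ h => hf h)]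
  refine (Finset.sum_subset (Finset.subset_univ _) (fun b _ hb => ?_)).symm
  exact h b (fun a hab => hb (Finset.mem_image.mpr ⟨a, Finset.mem_univ a, hab⟩))

lemma extend_dot_self {f : α → β} (hf : Function.Injective f) (x : α → ℝ) :
    (Function.extend f x 0) ⬝ᵥ (Function.extend f x 0) = x ⬝ᵥ x := by
  unfold dotProduct
  rw [sum_ext_range hf _ (fun b hb => by
    rw [Function.extend_apply' _ _ _ (by simpa using hb)]; simp)]
  exact Finset.sum_congr rfl (fun a _ => by rw [hf.extend_apply])

lemma extend_dot (A : Matrix β β ℝ) {f : α → β} (hf : Function.Injective f) (x : α → ℝ) :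
    (Function.extend f x 0) ⬝ᵥ (A *ᵥ (Function.extend f x 0))
      = x ⬝ᵥ ((A.submatrix f f) *ᵥ x) := by
  unfold dotProduct
  rw [sum_ext_range hf _ (fun b hb => by
    rw [Function.extend_apply' _ _ _ (by simpa using hb)]; simp)]
  refine Finset.sum_congr rfl (fun a _ => ?_)
  rw [hf.extend_apply]
  congr 1
  show (A *ᵥ Function.extend f x 0) (f a) = ((A.submatrix f f) *ᵥ x) a
  unfold Matrix.mulVec dotProduct
  rw [sum_ext_range hf _ (fun b hb => by
    rw [Function.extend_apply' _ _ _ (by simpa using hb)]; simp)]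
  exact Finset.sum_congr rfl (fun a' _ => by rw [hf.extend_apply]; rfl)

lemma sum_comp_le {f : α → β} (hf : Function.Injective f) (F : β → ℝ)
    (h0 : ∀ b, 0 ≤ F b) : ∑ a, F (f a) ≤ ∑ b, F b := by
  rw [← Finset.sum_image (g := f) (f := F) (fun x _ y _ h => hf h)]
  exact Finset.sum_le_sum_of_subset_of_nonneg (Finset.subset_univ _) (fun b _ _ => h0 b)

lemma minEig_rayleigh [Nonempty α] (G : SimpleGraph α) (x : α → ℝ) :
    minEig G * (x ⬝ᵥ x) ≤ x ⬝ᵥ (adjM G *ᵥ x) :=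
  inf_rayleigh (adjM_herm G) x

lemma minEig_exists [Nonempty α] (G : SimpleGraph α) :
    ∃ x : α → ℝ, x ≠ 0 ∧ adjM G *ᵥ x = minEig G • x :=
  minEig_mem' (adjM_herm G)

lemma minEig_nonpos [Nonempty α] (G : SimpleGraph α) : minEig G ≤ 0 := by
  obtain ⟨u⟩ := ‹Nonempty α›
  set x : α → ℝ := fun v => if v = u then 1 else 0 with hxdef
  have h1 : x ⬝ᵥ x = 1 := by simp [hxdef, dotProduct]
  have h2 : x ⬝ᵥ (adjM G *ᵥ x) = 0 := by
    simp only [hxdef, dotProduct, Matrix.mulVec, adjM, mul_ite, ite_mul, mul_one, mul_zero,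
      one_mul, zero_mul, Finset.sum_ite_eq', Finset.mem_univ, if_true]
    exact Finset.sum_eq_zero (fun v _ => by
      by_cases hvu : v = u
      · simp [hvu]
      · simp [hvu])
  have := minEig_rayleigh G x
  rw [h1, h2, mul_one] at this
  exact this

lemma minEig_mono [Nonempty α] {H : SimpleGraph α} {G : SimpleGraph β} (f : α → β)
    (hf : Function.Injective f) (hadj : ∀ u v, H.Adj u v ↔ G.Adj (f u) (f v)) :
    minEig G ≤ minEig H := by
  haveI : Nonempty β := ⟨f (Classical.arbitrary α)⟩
  obtain ⟨x, hx, hAx⟩ := minEig_exists H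
  have hsub : (adjM G).submatrix f f = adjM H := by
    refine Matrix.ext (fun u v => ?_)
    simp [adjM, Matrix.submatrix_apply, hadj]
  have h1 := minEig_rayleigh G (Function.extend f x 0)
  rw [extend_dot_self hf, extend_dot (adjM G) hf, hsub, hAx] at h1
  have h2 : x ⬝ᵥ (minEig H • x) = minEig H * (x ⬝ᵥ x) := by
    rw [dotProduct_smul]; rfl
  rw [h2] at h1
  exact le_of_mul_le_mul_right h1 (dot_self_pos hx)

end GraphLayer

/-! ### Embeddings -/

section Embeddings
variable {V W : Type*} (F : SimpleGraph V) (R : Set V) (G : SimpleGraph W) (S : Set W)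

lemma embE1 (ℓ : ℕ) (u v : V ⊕ Fin (ℓ+1)) :
    (pathExt F R ℓ).Adj u v ↔ (pathAug F R G S ℓ).Adj
      (Sum.map id Sum.inr u) (Sum.map id Sum.inr v) := by
  rcases u with u | i <;> rcases v with v | j <;>
    simp [pathExt, pathAug, SimpleGraph.fromRel_adj, Sum.map]

lemma embE2 (ℓ : ℕ) (u v : W ⊕ Fin (ℓ+1)) :
    (pathExt G S ℓ).Adj u v ↔ (pathAug F R G S ℓ).Adj
      ((Sum.elim (fun w => Sum.inr (Sum.inl w)) (fun i => Sum.inr (Sum.inr (Fin.rev i)))) u)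
      ((Sum.elim (fun w => Sum.inr (Sum.inl w)) (fun i => Sum.inr (Sum.inr (Fin.rev i)))) v) := by
  rcases u with u | i <;> rcases v with v | j <;>
    simp [pathExt, pathAug, SimpleGraph.fromRel_adj, Fin.ext_iff, Fin.val_rev, -Fin.val_eq_zero_iff]
  all_goals try intro _
  all_goals try have hi := i.isLt
  all_goals try have hj := j.isLt
  all_goals omega

lemma embE5 (ℓ : ℕ) (u v : V ⊕ Fin (ℓ+1)) :
    (pathExt F R ℓ).Adj u v ↔ (pathExt F R (ℓ+1)).Adj
      (Sum.map id Fin.castSucc u) (Sum.map id Fin.castSucc v) := by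
  rcases u with u | i <;> rcases v with v | j <;>
    simp [pathExt, SimpleGraph.fromRel_adj, Fin.ext_iff, -Fin.val_eq_zero_iff]

/-- The left embedding used in the splitting argument. -/
def fE3 (V W : Type*) (p q : ℕ) : V ⊕ Fin (p+1) → V ⊕ W ⊕ Fin (p+q+2+1) :=
  Sum.map id (fun i => Sum.inr (Fin.castLE (by omega) i))

/-- The right embedding used in the splitting argument. -/
def fE4 (V W : Type*) (p q : ℕ) : W ⊕ Fin (q+1) → V ⊕ W ⊕ Fin (p+q+2+1) :=
  Sum.elim (fun w => Sum.inr (Sum.inl w))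
    (fun j => Sum.inr (Sum.inr ⟨p+q+2 - (j:ℕ), by omega⟩))

lemma fE3_inj (p q : ℕ) : Function.Injective (fE3 V W p q) :=
  Function.Injective.sumMap (fun _ _ h => h)
    (fun i j h => Fin.castLE_injective _ (Sum.inr_injective h))

lemma fE4_inj (p q : ℕ) : Function.Injective (fE4 V W p q) := by
  intro a b h
  rcases a with a | i <;> rcases b with b | j <;> simp [fE4] at h ⊢
  · exact h
  · have hi := i.isLt; have hj := j.isLt
    exact Fin.ext (by omega)

lemma embE3 (p q : ℕ) (u v : V ⊕ Fin (p+1)) :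
    (pathExt F R p).Adj u v ↔ (pathAug F R G S (p+q+2)).Adj
      (fE3 V W p q u) (fE3 V W p q v) := by
  rcases u with u | i <;> rcases v with v | j <;>
    simp [pathExt, pathAug, fE3, SimpleGraph.fromRel_adj, Fin.ext_iff, -Fin.val_eq_zero_iff]
  all_goals try intro _
  all_goals try have hi := i.isLt
  all_goals try have hj := j.isLt
  all_goals omega

lemma embE4 (p q : ℕ) (u v : W ⊕ Fin (q+1)) :
    (pathExt G S q).Adj u v ↔ (pathAug F R G S (p+q+2)).Adj
      (fE4 V W p q u) (fE4 V W p q v) := by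
  rcases u with u | i <;> rcases v with v | j <;>
    simp [pathExt, pathAug, fE4, SimpleGraph.fromRel_adj, Fin.ext_iff, -Fin.val_eq_zero_iff]
  all_goals try intro _
  all_goals try have hi := i.isLt
  all_goals try have hj := j.isLt
  all_goals omega

end Embeddings

/-! ### The key splitting inequality -/

section Key
variable {V W : Type*} [Fintype V] [Fintype W] (F : SimpleGraph V) (R : Set V)
  (G : SimpleGraph W) (S : Set W)

set_option maxHeartbeats 2000000 in
lemma key_split (p q : ℕ) (x : V ⊕ W ⊕ Fin (p+q+2+1) → ℝ) :
    min (minEig (pathExt F R p)) (minEig (pathExt G S q)) * (x ⬝ᵥ x)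
      - (x (Sum.inr (Sum.inr ⟨p, by omega⟩)) * x (Sum.inr (Sum.inr ⟨p, by omega⟩))
        + 2 * (x (Sum.inr (Sum.inr ⟨p+1, by omega⟩)) * x (Sum.inr (Sum.inr ⟨p+1, by omega⟩)))
        + x (Sum.inr (Sum.inr ⟨p+2, by omega⟩)) * x (Sum.inr (Sum.inr ⟨p+2, by omega⟩)))
    ≤ x ⬝ᵥ (adjM (pathAug F R G S (p+q+2)) *ᵥ x) := by
  classical
  set A := adjM (pathAug F R G S (p+q+2)) with hA_def
  have hA : A.IsHermitian := adjM_herm _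
  set vP : V ⊕ W ⊕ Fin (p+q+2+1) := Sum.inr (Sum.inr ⟨p, by omega⟩) with hvP
  set vK : V ⊕ W ⊕ Fin (p+q+2+1) := Sum.inr (Sum.inr ⟨p+1, by omega⟩) with hvK
  set vQ : V ⊕ W ⊕ Fin (p+q+2+1) := Sum.inr (Sum.inr ⟨p+2, by omega⟩) with hvQ
  set y := Function.extend (fE3 V W p q) (x ∘ fE3 V W p q) 0 with hy
  set z := Function.extend (fE4 V W p q) (x ∘ fE4 V W p q) 0 with hz
  set w : V ⊕ W ⊕ Fin (p+q+2+1) → ℝ := fun b => if b = vK then x vK else 0 with hw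
  haveI hNy : Nonempty (V ⊕ Fin (p+1)) := ⟨Sum.inr ⟨0, by omega⟩⟩
  haveI hNz : Nonempty (W ⊕ Fin (q+1)) := ⟨Sum.inr ⟨0, by omega⟩⟩
  have hAzero : ∀ {b c}, ¬ (pathAug F R G S (p+q+2)).Adj b c → A b c = 0 := by
    intro b c h; simp [hA_def, adjM, h]
  have hAone : ∀ {b c}, (pathAug F R G S (p+q+2)).Adj b c → A b c = 1 := by
    intro b c h; simp [hA_def, adjM, h]
  -- supports
  have hy_supp : ∀ b, y b ≠ 0 → (∃ u : V, b = Sum.inl u) ∨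
      (∃ i : Fin (p+q+2+1), b = Sum.inr (Sum.inr i) ∧ (i:ℕ) ≤ p) := by
    intro b hb
    by_contra hcon
    push_neg at hcon
    apply hb
    rw [hy, Function.extend_apply' _ _ _ ?_]
    · rfl
    · rintro ⟨a, rfl⟩
      rcases a with u | i
      · exact hcon.1 u rfl
      · have h1 := hcon.2 _ rfl
        have h2 := i.isLt
        simp at h1
        omega
  have hz_supp : ∀ b, z b ≠ 0 → (∃ u : W, b = Sum.inr (Sum.inl u)) ∨
      (∃ i : Fin (p+q+2+1), b = Sum.inr (Sum.inr i) ∧ p+2 ≤ (i:ℕ)) := by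
    intro b hb
    by_contra hcon
    push_neg at hcon
    apply hb
    rw [hz, Function.extend_apply' _ _ _ ?_]
    · rfl
    · rintro ⟨a, rfl⟩
      rcases a with u | i
      · exact hcon.1 u rfl
      · have h1 := hcon.2 _ rfl
        have h2 := i.isLt
        simp at h1
        omega
  have hA0 : ∀ b c, y b ≠ 0 → z c ≠ 0 → A b c = 0 := by
    intro b c hb hc
    apply hAzero
    intro hadj
    rcases hy_supp b hb with ⟨u, rfl⟩ | ⟨i, rfl, hip⟩ <;>
      rcases hz_supp c hc with ⟨v, rfl⟩ | ⟨j, rfl, hjq⟩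
    all_goals first
      | (simp [pathAug, SimpleGraph.fromRel_adj, -Fin.val_eq_zero_iff] at hadj; omega)
      | (simp [pathAug, SimpleGraph.fromRel_adj, -Fin.val_eq_zero_iff] at hadj; exact absurd hadj.2 (by omega))
      | simp [pathAug, SimpleGraph.fromRel_adj, -Fin.val_eq_zero_iff] at hadj
  -- cross terms
  have hwmul : ∀ b, (A *ᵥ w) b = A b vK * x vK := by
    intro b
    show ∑ c, A b c * w c = _
    simp [hw, mul_ite, mul_zero, Finset.sum_ite_eq', Finset.mem_univ]
  have hsymmQ : ∀ u v : V ⊕ W ⊕ Fin (p+q+2+1) → ℝ,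
      v ⬝ᵥ (A *ᵥ u) = u ⬝ᵥ (A *ᵥ v) := fun u v => by
    rw [dot_mulVec_symm hA, dotProduct_comm]
  have hyz : y ⬝ᵥ (A *ᵥ z) = 0 := by
    apply Finset.sum_eq_zero; intro b _
    by_cases hb : y b = 0
    · rw [hb, zero_mul]
    · have h0 : (A *ᵥ z) b = 0 := by
        apply Finset.sum_eq_zero; intro c _
        show A b c * z c = 0
        by_cases hc : z c = 0
        · rw [hc, mul_zero]
        · rw [hA0 b c hb hc, zero_mul]
      rw [h0, mul_zero]
  have hfp : fE3 V W p q (Sum.inr ⟨p, by omega⟩) = vP := rfl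
  have hfq : fE4 V W p q (Sum.inr ⟨q, by omega⟩) = vQ := by
    rw [hvQ]
    show Sum.inr (Sum.inr _) = Sum.inr (Sum.inr _)
    congr 1
    congr 1
    exact Fin.ext (by simp; omega)
  have hyvP : y vP = x vP := by
    rw [hy, ← hfp, (fE3_inj p q).extend_apply]
    simp [hfp]
  have hzvQ : z vQ = x vQ := by
    rw [hz, ← hfq, (fE4_inj p q).extend_apply]
    simp [hfq]
  have hnePK : vP ≠ vK := by
    rw [hvP, hvK]
    intro hcontra
    have hval : p = p + 1 := by
      have := congrArg (fun t : V ⊕ W ⊕ Fin (p+q+2+1) => match t with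
        | Sum.inr (Sum.inr t) => (t:ℕ) | _ => 0) hcontra
      simpa using this
    omega
  have hneQK : vQ ≠ vK := by
    rw [hvQ, hvK]
    intro hcontra
    have hval : p + 2 = p + 1 := by
      have := congrArg (fun t : V ⊕ W ⊕ Fin (p+q+2+1) => match t with
        | Sum.inr (Sum.inr t) => (t:ℕ) | _ => 0) hcontra
      simpa using this
    omega
  have hAPK : A vP vK = 1 := by
    apply hAone
    exact ⟨hnePK, Or.inl (by simp [hvP, hvK])⟩
  have hAQK : A vQ vK = 1 := by
    apply hAone
    exact ⟨hneQK, Or.inr (by simp [hvQ, hvK])⟩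
  have hyw : y ⬝ᵥ (A *ᵥ w) = x vP * x vK := by
    show ∑ b, y b * (A *ᵥ w) b = _
    rw [Finset.sum_congr rfl (fun b _ => by rw [hwmul b])]
    rw [Finset.sum_eq_single vP]
    · rw [hyvP, hAPK]; ring
    · intro b _ hbP
      by_cases hb : y b = 0
      · rw [hb, zero_mul]
      rcases hy_supp b hb with ⟨u, rfl⟩ | ⟨i, rfl, hip⟩
      · rw [hAzero ?_, zero_mul, mul_zero]
        intro hadj
        first
          | (simp [pathAug, SimpleGraph.fromRel_adj, hvK] at hadj; omega)
          | (simp [pathAug, SimpleGraph.fromRel_adj, hvK] at hadj; exact absurd hadj.2 (by omega))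
          | simp [pathAug, SimpleGraph.fromRel_adj, hvK] at hadj
      · have hinep : (i:ℕ) ≠ p := by
          intro h
          exact hbP (by rw [hvP]; exact congrArg _ (congrArg _ (Fin.ext h)))
        rw [hAzero ?_, zero_mul, mul_zero]
        intro hadj
        first
          | (simp [pathAug, SimpleGraph.fromRel_adj, hvK] at hadj; omega)
          | (simp [pathAug, SimpleGraph.fromRel_adj, hvK] at hadj; exact absurd hadj.2 (by omega))
          | simp [pathAug, SimpleGraph.fromRel_adj, hvK] at hadj
    · intro h; exact absurd (Finset.mem_univ vP) h
  have hzw : z ⬝ᵥ (A *ᵥ w) = x vQ * x vK := by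
    show ∑ b, z b * (A *ᵥ w) b = _
    rw [Finset.sum_congr rfl (fun b _ => by rw [hwmul b])]
    rw [Finset.sum_eq_single vQ]
    · rw [hzvQ, hAQK]; ring
    · intro b _ hbQ
      by_cases hb : z b = 0
      · rw [hb, zero_mul]
      rcases hz_supp b hb with ⟨u, rfl⟩ | ⟨i, rfl, hip⟩
      · rw [hAzero ?_, zero_mul, mul_zero]
        intro hadj
        first
          | (simp [pathAug, SimpleGraph.fromRel_adj, hvK] at hadj; omega)
          | (simp [pathAug, SimpleGraph.fromRel_adj, hvK] at hadj; exact absurd hadj.2 (by omega))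
          | simp [pathAug, SimpleGraph.fromRel_adj, hvK] at hadj
      · have hineq : (i:ℕ) ≠ p+2 := by
          intro h
          exact hbQ (by rw [hvQ]; exact congrArg _ (congrArg _ (Fin.ext h)))
        rw [hAzero ?_, zero_mul, mul_zero]
        intro hadj
        first
          | (simp [pathAug, SimpleGraph.fromRel_adj, hvK] at hadj; omega)
          | (simp [pathAug, SimpleGraph.fromRel_adj, hvK] at hadj; exact absurd hadj.2 (by omega))
          | simp [pathAug, SimpleGraph.fromRel_adj, hvK] at hadj
    · intro h; exact absurd (Finset.mem_univ vQ) h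
  have hww : w ⬝ᵥ (A *ᵥ w) = 0 := by
    show ∑ b, w b * (A *ᵥ w) b = 0
    apply Finset.sum_eq_zero; intro b _
    by_cases hb : b = vK
    · subst hb
      rw [hwmul, hAzero (SimpleGraph.irrefl _), zero_mul, mul_zero]
    · simp [hw, hb]
  -- the decomposition of x
  have hx_decomp : x = y + z + w := by
    funext b
    show x b = y b + z b + w b
    rcases b with u | b'
    · have hy1 : y (Sum.inl u) = x (Sum.inl u) := by
        rw [hy]
        exact (fE3_inj p q).extend_apply _ _ (Sum.inl u)
      have hz1 : z (Sum.inl u) = 0 := by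
        rw [hz, Function.extend_apply' _ _ _ (by rintro ⟨a | a, h⟩ <;> simp [fE4] at h)]
        rfl
      have hw1 : w (Sum.inl u) = 0 := by simp [hw, hvK]
      rw [hy1, hz1, hw1]; ring
    rcases b' with u | i
    · have hz1 : z (Sum.inr (Sum.inl u)) = x (Sum.inr (Sum.inl u)) := by
        rw [hz]
        exact (fE4_inj p q).extend_apply _ _ (Sum.inl u)
      have hy1 : y (Sum.inr (Sum.inl u)) = 0 := by
        rw [hy, Function.extend_apply' _ _ _ (by rintro ⟨a | a, h⟩ <;> simp [fE3] at h)]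
        rfl
      have hw1 : w (Sum.inr (Sum.inl u)) = 0 := by simp [hw, hvK]
      rw [hy1, hz1, hw1]; ring
    · have hi := i.isLt
      rcases Nat.lt_trichotomy (i:ℕ) (p+1) with hlt | heq | hgt
      · have hb3 : Sum.inr (Sum.inr i) = fE3 V W p q (Sum.inr ⟨(i:ℕ), hlt⟩) := by
          show (Sum.inr (Sum.inr i) : V ⊕ W ⊕ Fin (p+q+2+1)) = Sum.inr (Sum.inr _)
          exact congrArg _ (congrArg _ (Fin.ext (by simp)))
        have hy1 : y (Sum.inr (Sum.inr i)) = x (Sum.inr (Sum.inr i)) := by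
          rw [hy, hb3, (fE3_inj p q).extend_apply, Function.comp_apply, ← hb3]
        have hz1 : z (Sum.inr (Sum.inr i)) = 0 := by
          rw [hz, Function.extend_apply' _ _ _ ?_]
          · rfl
          · rintro ⟨a | a, h⟩
            · simp [fE4] at h
            · have := a.isLt
              simp [fE4, Fin.ext_iff] at h
              omega
        have hw1 : w (Sum.inr (Sum.inr i)) = 0 := by
          rw [hw]
          simp only [hvK]
          rw [if_neg (by intro h; have := congrArg (fun t => match t with
            | Sum.inr (Sum.inr t) => (t:ℕ) | _ => 0) h; simp at this; omega)]
        rw [hy1, hz1, hw1]; ring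
      · have hbK : (Sum.inr (Sum.inr i) : V ⊕ W ⊕ Fin (p+q+2+1)) = vK := by
          rw [hvK]; exact congrArg _ (congrArg _ (Fin.ext heq))
        have hy1 : y (Sum.inr (Sum.inr i)) = 0 := by
          rw [hy, Function.extend_apply' _ _ _ ?_]
          · rfl
          · rintro ⟨a | a, h⟩
            · simp [fE3] at h
            · have := a.isLt
              simp [fE3, Fin.ext_iff] at h
              omega
        have hz1 : z (Sum.inr (Sum.inr i)) = 0 := by
          rw [hz, Function.extend_apply' _ _ _ ?_]
          · rfl
          · rintro ⟨a | a, h⟩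
            · simp [fE4] at h
            · have := a.isLt
              simp [fE4, Fin.ext_iff] at h
              omega
        have hw1 : w (Sum.inr (Sum.inr i)) = x (Sum.inr (Sum.inr i)) := by
          simp [hw, hbK]
        rw [hy1, hz1, hw1]; ring
      · have hb4 : Sum.inr (Sum.inr i) = fE4 V W p q (Sum.inr ⟨p+q+2-(i:ℕ), by omega⟩) := by
          show (Sum.inr (Sum.inr i) : V ⊕ W ⊕ Fin (p+q+2+1)) = Sum.inr (Sum.inr _)
          exact congrArg _ (congrArg _ (Fin.ext (by simp; omega)))
        have hz1 : z (Sum.inr (Sum.inr i)) = x (Sum.inr (Sum.inr i)) := by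
          rw [hz, hb4, (fE4_inj p q).extend_apply, Function.comp_apply, ← hb4]
        have hy1 : y (Sum.inr (Sum.inr i)) = 0 := by
          rw [hy, Function.extend_apply' _ _ _ ?_]
          · rfl
          · rintro ⟨a | a, h⟩
            · simp [fE3] at h
            · have := a.isLt
              simp [fE3, Fin.ext_iff] at h
              omega
        have hw1 : w (Sum.inr (Sum.inr i)) = 0 := by
          rw [hw]
          simp only [hvK]
          rw [if_neg (by intro h; have := congrArg (fun t => match t with
            | Sum.inr (Sum.inr t) => (t:ℕ) | _ => 0) h; simp at this; omega)]
        rw [hy1, hz1, hw1]; ring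
  -- expansion of the quadratic form
  have hQ : x ⬝ᵥ (A *ᵥ x) = y ⬝ᵥ (A *ᵥ y) + z ⬝ᵥ (A *ᵥ z)
      + 2*(x vP * x vK) + 2*(x vQ * x vK) := by
    conv_lhs => rw [hx_decomp]
    rw [Matrix.mulVec_add, Matrix.mulVec_add]
    rw [dotProduct_add, dotProduct_add]
    rw [add_dotProduct, add_dotProduct, add_dotProduct,
      add_dotProduct, add_dotProduct, add_dotProduct]
    rw [hyz, hyw, hzw, hww, hsymmQ y z, hsymmQ y w, hsymmQ z w, hyz, hyw, hzw]
    ring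
  -- Rayleigh bounds on the pieces
  have hsubF : A.submatrix (fE3 V W p q) (fE3 V W p q) = adjM (pathExt F R p) := by
    refine Matrix.ext (fun u v => ?_)
    simp only [Matrix.submatrix_apply, hA_def, adjM]
    exact if_congr (embE3 F R G S p q u v).symm rfl rfl
  have hsubG : A.submatrix (fE4 V W p q) (fE4 V W p q) = adjM (pathExt G S q) := by
    refine Matrix.ext (fun u v => ?_)
    simp only [Matrix.submatrix_apply, hA_def, adjM]
    exact if_congr (embE4 F R G S p q u v).symm rfl rfl
  have hQy : minEig (pathExt F R p) * ((x ∘ fE3 V W p q) ⬝ᵥ (x ∘ fE3 V W p q))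
      ≤ y ⬝ᵥ (A *ᵥ y) := by
    rw [hy, extend_dot A (fE3_inj p q), hsubF]
    exact minEig_rayleigh _ _
  have hQz : minEig (pathExt G S q) * ((x ∘ fE4 V W p q) ⬝ᵥ (x ∘ fE4 V W p q))
      ≤ z ⬝ᵥ (A *ᵥ z) := by
    rw [hz, extend_dot A (fE4_inj p q), hsubG]
    exact minEig_rayleigh _ _
  -- norm bookkeeping
  set sy := (x ∘ fE3 V W p q) ⬝ᵥ (x ∘ fE3 V W p q) with hsy
  set sz := (x ∘ fE4 V W p q) ⬝ᵥ (x ∘ fE4 V W p q) with hsz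
  have hsy0 : 0 ≤ sy := dot_self_nonneg' _
  have hsz0 : 0 ≤ sz := dot_self_nonneg' _
  have hsum : sy + sz ≤ x ⬝ᵥ x := by
    have hinj : Function.Injective (Sum.elim (fE3 V W p q) (fE4 V W p q)) := by
      intro a b h
      rcases a with a | a <;> rcases b with b | b
      · exact congrArg Sum.inl (fE3_inj p q h)
      · exfalso
        rcases a with a | i <;> rcases b with b | j <;>
          simp [fE3, fE4, Fin.ext_iff] at h
        have := i.isLt; have := j.isLt; omega
      · exfalso
        rcases a with a | i <;> rcases b with b | j <;>
          simp [fE3, fE4, Fin.ext_iff] at h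
        have := i.isLt; have := j.isLt; omega
      · exact congrArg Sum.inr (fE4_inj p q h)
    have h := sum_comp_le hinj (fun b => x b * x b) (fun b => mul_self_nonneg _)
    calc sy + sz
        = ∑ c : (V ⊕ Fin (p+1)) ⊕ (W ⊕ Fin (q+1)),
            (fun b => x b * x b) (Sum.elim (fE3 V W p q) (fE4 V W p q) c) := by
          rw [Fintype.sum_sum_type]; rfl
      _ ≤ ∑ b, x b * x b := h
      _ = x ⬝ᵥ x := rfl
  -- conclusion
  have hm0 : min (minEig (pathExt F R p)) (minEig (pathExt G S q)) ≤ 0 :=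
    le_trans (min_le_left _ _) (minEig_nonpos _)
  have hmF : min (minEig (pathExt F R p)) (minEig (pathExt G S q)) ≤ minEig (pathExt F R p) :=
    min_le_left _ _
  have hmG : min (minEig (pathExt F R p)) (minEig (pathExt G S q)) ≤ minEig (pathExt G S q) :=
    min_le_right _ _
  have h1 : min (minEig (pathExt F R p)) (minEig (pathExt G S q)) * (x ⬝ᵥ x)
      ≤ min (minEig (pathExt F R p)) (minEig (pathExt G S q)) * (sy + sz) :=
    mul_le_mul_of_nonpos_left hsum hm0
  have h2 : min (minEig (pathExt F R p)) (minEig (pathExt G S q)) * sy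
      ≤ minEig (pathExt F R p) * sy := mul_le_mul_of_nonneg_right hmF hsy0
  have h3 : min (minEig (pathExt F R p)) (minEig (pathExt G S q)) * sz
      ≤ minEig (pathExt G S q) * sz := mul_le_mul_of_nonneg_right hmG hsz0
  have c1 : -(x vP * x vP + x vK * x vK) ≤ 2*(x vP * x vK) := by
    nlinarith [sq_nonneg (x vP + x vK)]
  have c2 : -(x vQ * x vQ + x vK * x vK) ≤ 2*(x vQ * x vK) := by
    nlinarith [sq_nonneg (x vQ + x vK)]
  rw [hQ]
  nlinarith [h1, h2, h3, hQy, hQz, c1, c2]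

end Key

/-! ### Monotonicity along the path -/

lemma pathExt_le_of_tendsto {V : Type*} [Fintype V] (F : SimpleGraph V) (R : Set V) {a : ℝ}
    (hF : Filter.Tendsto (fun ℓ => minEig (pathExt F R ℓ)) Filter.atTop (nhds a)) (n : ℕ) :
    a ≤ minEig (pathExt F R n) := by
  have hstep : ∀ k : ℕ, minEig (pathExt F R (k+1)) ≤ minEig (pathExt F R k) := by
    intro k
    haveI : Nonempty (V ⊕ Fin (k+1)) := ⟨Sum.inr ⟨0, by omega⟩⟩
    exact minEig_mono (Sum.map id Fin.castSucc)
      (Function.Injective.sumMap (fun _ _ h => h) (Fin.castSucc_injective _))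
      (embE5 F R k)
  exact le_of_tendsto hF (Filter.eventually_atTop.mpr
    ⟨n, fun m hm => antitone_nat_of_succ_le (f := fun n => minEig (pathExt F R n)) hstep hm⟩)

/-- `lim_{ℓ→∞} λ₁(F_R, ℓ, G_S) = min (lim_{ℓ→∞} λ₁(F_R, ℓ)) (lim_{ℓ→∞} λ₁(G_S, ℓ))`. -/
theorem stmt11 {V W : Type*} [Fintype V] [Fintype W] (F : SimpleGraph V) (R : Set V)
    (hR : R.Nonempty) (G : SimpleGraph W) (S : Set W) (hS : S.Nonempty) (a b : ℝ)
    (hF : Filter.Tendsto (fun ℓ => minEig (pathExt F R ℓ)) Filter.atTop (nhds a))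
    (hG : Filter.Tendsto (fun ℓ => minEig (pathExt G S ℓ)) Filter.atTop (nhds b)) :
    Filter.Tendsto (fun ℓ => minEig (pathAug F R G S ℓ)) Filter.atTop (nhds (min a b)) := by
  classical
  -- upper bound
  have hub : ∀ ℓ : ℕ, minEig (pathAug F R G S ℓ)
      ≤ min (minEig (pathExt F R ℓ)) (minEig (pathExt G S ℓ)) := by
    intro ℓ
    haveI : Nonempty (V ⊕ Fin (ℓ+1)) := ⟨Sum.inr ⟨0, by omega⟩⟩
    haveI : Nonempty (W ⊕ Fin (ℓ+1)) := ⟨Sum.inr ⟨0, by omega⟩⟩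
    refine le_min ?_ ?_
    · exact minEig_mono (Sum.map id Sum.inr)
        (Function.Injective.sumMap (fun _ _ h => h) Sum.inr_injective) (embE1 F R G S ℓ)
    · refine minEig_mono (Sum.elim (fun w => Sum.inr (Sum.inl w))
        (fun i => Sum.inr (Sum.inr (Fin.rev i)))) ?_ (embE2 F R G S ℓ)
      intro u v h
      rcases u with u | i <;> rcases v with v | j <;> simp at h ⊢
      · exact h
      · exact h
  -- lower bound
  have hlb : ∀ ℓ : ℕ, 2 ≤ ℓ → min a b - 6/((ℓ:ℝ)-1) ≤ minEig (pathAug F R G S ℓ) := by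
    intro ℓ hℓ2
    haveI hNaug : Nonempty (V ⊕ W ⊕ Fin (ℓ+1)) := ⟨Sum.inr (Sum.inr ⟨0, by omega⟩)⟩
    obtain ⟨x, hx0, hAx⟩ := minEig_exists (pathAug F R G S ℓ)
    have hspos := dot_self_pos hx0
    have hQval : x ⬝ᵥ (adjM (pathAug F R G S ℓ) *ᵥ x)
        = minEig (pathAug F R G S ℓ) * (x ⬝ᵥ x) := by
      rw [hAx, dotProduct_smul]; rfl
    set c : ℕ → ℝ := fun i => if h : i < ℓ+1 then x (Sum.inr (Sum.inr ⟨i, h⟩)) else 0 with hc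
    have hc1 : ∑ i ∈ Finset.range (ℓ+1), c i * c i ≤ x ⬝ᵥ x := by
      have he : ∑ i ∈ Finset.range (ℓ+1), c i * c i
          = ∑ i : Fin (ℓ+1), x (Sum.inr (Sum.inr i)) * x (Sum.inr (Sum.inr i)) := by
        rw [← Fin.sum_univ_eq_sum_range (fun i => c i * c i) (ℓ+1)]
        refine Finset.sum_congr rfl (fun i _ => ?_)
        have h1 : c (i:ℕ) = x (Sum.inr (Sum.inr i)) := by
          rw [hc]
          simp only [dif_pos i.isLt, Fin.eta]
        rw [h1]
      rw [he]
      have hsplit : x ⬝ᵥ x = (∑ u : V, x (Sum.inl u) * x (Sum.inl u))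
          + ((∑ u : W, x (Sum.inr (Sum.inl u)) * x (Sum.inr (Sum.inl u)))
            + ∑ i : Fin (ℓ+1), x (Sum.inr (Sum.inr i)) * x (Sum.inr (Sum.inr i))) := by
        show ∑ b, x b * x b = _
        rw [Fintype.sum_sum_type]
        congr 1
        rw [Fintype.sum_sum_type]
      rw [hsplit]
      have t1 : (0:ℝ) ≤ ∑ u : V, x (Sum.inl u) * x (Sum.inl u) :=
        Finset.sum_nonneg fun _ _ => mul_self_nonneg _
      have t2 : (0:ℝ) ≤ ∑ u : W, x (Sum.inr (Sum.inl u)) * x (Sum.inr (Sum.inl u)) :=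
        Finset.sum_nonneg fun _ _ => mul_self_nonneg _
      linarith
    have hcard : (Finset.Icc 1 (ℓ-1)).card = ℓ-1 := by rw [Nat.card_Icc]; omega
    have hgen : ∀ g : ℕ → ℕ, (∀ k k', 1 ≤ k → 1 ≤ k' → g k = g k' → k = k') →
        (∀ k, k ≤ ℓ-1 → g k ≤ ℓ) →
        ∑ k ∈ Finset.Icc 1 (ℓ-1), c (g k) * c (g k) ≤ x ⬝ᵥ x := by
      intro g hginj hgle
      calc ∑ k ∈ Finset.Icc 1 (ℓ-1), c (g k) * c (g k)
          = ∑ j ∈ (Finset.Icc 1 (ℓ-1)).image g, c j * c j := by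
            rw [Finset.sum_image (fun k hk k' hk' h =>
              hginj k k' (Finset.mem_Icc.mp hk).1 (Finset.mem_Icc.mp hk').1 h)]
        _ ≤ ∑ j ∈ Finset.range (ℓ+1), c j * c j := by
            refine Finset.sum_le_sum_of_subset_of_nonneg ?_ (fun _ _ _ => mul_self_nonneg _)
            intro j hj
            obtain ⟨k, hk, rfl⟩ := Finset.mem_image.mp hj
            exact Finset.mem_range.mpr (by
              have := hgle k (Finset.mem_Icc.mp hk).2; omega)
        _ ≤ x ⬝ᵥ x := hc1
    have htrip : ∑ k ∈ Finset.Icc 1 (ℓ-1),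
        (c (k-1)*c (k-1) + c k * c k + c (k+1)*c (k+1)) ≤ 3 * (x ⬝ᵥ x) := by
      rw [Finset.sum_add_distrib, Finset.sum_add_distrib]
      have g1 := hgen (fun k => k-1) (by intro k k' h1 h2 h; omega) (by intro k hk; omega)
      have g2 := hgen (fun k => k) (by intro k k' h1 h2 h; omega) (by intro k hk; omega)
      have g3 := hgen (fun k => k+1) (by intro k k' h1 h2 h; omega) (by intro k hk; omega)
      linarith
    have hl1 : (0:ℝ) < (ℓ:ℝ) - 1 := by
      have h2 : (2:ℝ) ≤ (ℓ:ℝ) := by exact_mod_cast hℓ2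
      linarith
    have hex : ∃ k ∈ Finset.Icc 1 (ℓ-1),
        c (k-1)*c (k-1) + c k*c k + c (k+1)*c (k+1) ≤ 3*(x ⬝ᵥ x)/((ℓ:ℝ)-1) := by
      by_contra hcon
      push_neg at hcon
      have hne : (Finset.Icc 1 (ℓ-1)).Nonempty := ⟨1, Finset.mem_Icc.mpr ⟨le_refl 1, by omega⟩⟩
      have hlt := Finset.sum_lt_sum_of_nonempty hne (fun k hk => hcon k hk)
      rw [Finset.sum_const, hcard] at hlt
      have hone : (1:ℕ) ≤ ℓ := by omega
      have hcast : ((ℓ-1 : ℕ):ℝ) = (ℓ:ℝ) - 1 := by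
        rw [Nat.cast_sub hone, Nat.cast_one]
      rw [nsmul_eq_mul, hcast] at hlt
      have heq2 : ((ℓ:ℝ)-1) * (3*(x ⬝ᵥ x)/((ℓ:ℝ)-1)) = 3*(x ⬝ᵥ x) := by
        field_simp
      rw [heq2] at hlt
      linarith [htrip]
    obtain ⟨k, hkmem, hktrip⟩ := hex
    rw [Finset.mem_Icc] at hkmem
    obtain ⟨p, q, hk1, hl2⟩ : ∃ p q, k = p + 1 ∧ ℓ = p + q + 2 :=
      ⟨k-1, ℓ-k-1, by omega, by omega⟩
    subst hl2
    subst hk1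
    have hkey := key_split F R G S p q x
    have hcv : ∀ (i : ℕ) (h : i < p+q+2+1), c i = x (Sum.inr (Sum.inr ⟨i, h⟩)) := by
      intro i h
      simp only [hc]
      exact dif_pos h
    have hcp : c ((p+1)-1) = x (Sum.inr (Sum.inr ⟨p, by omega⟩)) :=
      (congrArg c (by omega : (p+1)-1 = p)).trans (hcv p (by omega))
    have hck : c (p+1) = x (Sum.inr (Sum.inr ⟨p+1, by omega⟩)) := hcv (p+1) (by omega)
    have hcq : c ((p+1)+1) = x (Sum.inr (Sum.inr ⟨p+2, by omega⟩)) :=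
      (congrArg c (by omega : (p+1)+1 = p+2)).trans (hcv (p+2) (by omega))
    rw [hcp, hck, hcq] at hktrip
    have hmab : min a b ≤ min (minEig (pathExt F R p)) (minEig (pathExt G S q)) :=
      le_min (le_trans (min_le_left a b) (pathExt_le_of_tendsto F R hF p))
             (le_trans (min_le_right a b) (pathExt_le_of_tendsto G S hG q))
    set L : ℝ := ((p+q+2 : ℕ) : ℝ) - 1 with hLdef
    set s : ℝ := x ⬝ᵥ x with hsdef
    set P : ℝ := x (Sum.inr (Sum.inr ⟨p, by omega⟩)) * x (Sum.inr (Sum.inr ⟨p, by omega⟩)) with hP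
    set K : ℝ := x (Sum.inr (Sum.inr ⟨p+1, by omega⟩)) * x (Sum.inr (Sum.inr ⟨p+1, by omega⟩)) with hK
    set Q : ℝ := x (Sum.inr (Sum.inr ⟨p+2, by omega⟩)) * x (Sum.inr (Sum.inr ⟨p+2, by omega⟩)) with hQd
    have hP0 : 0 ≤ P := mul_self_nonneg _
    have hK0 : 0 ≤ K := mul_self_nonneg _
    have hQ0 : 0 ≤ Q := mul_self_nonneg _
    have e1 : (min a b - 6/L)*s = (min a b)*s - (6/L)*s := by ring
    have e2 : (6/L)*s = 2*(3*s/L) := by ring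
    have e3 : (min a b)*s
        ≤ min (minEig (pathExt F R p)) (minEig (pathExt G S q)) * s :=
      mul_le_mul_of_nonneg_right hmab hspos.le
    have e5 : min (minEig (pathExt F R p)) (minEig (pathExt G S q)) * s
        - (P + 2*K + Q) ≤ minEig (pathAug F R G S (p+q+2)) * s := by
      have := hQval
      linarith [hkey]
    have final : (min a b - 6/L)*s ≤ minEig (pathAug F R G S (p+q+2)) * s := by
      linarith [hktrip]
    exact le_of_mul_le_mul_right final hspos
  -- squeeze
  have hupperT : Filter.Tendsto
      (fun ℓ => min (minEig (pathExt F R ℓ)) (minEig (pathExt G S ℓ)))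
      Filter.atTop (nhds (min a b)) := hF.min hG
  have hlowerT : Filter.Tendsto (fun ℓ : ℕ => min a b - 6/((ℓ:ℝ)-1))
      Filter.atTop (nhds (min a b)) := by
    have hdenom : Filter.Tendsto (fun ℓ:ℕ => (ℓ:ℝ)-1) Filter.atTop Filter.atTop := by
      have := tendsto_atTop_add_const_right Filter.atTop (-1:ℝ) tendsto_natCast_atTop_atTop
      simpa [sub_eq_add_neg] using this
    have h0 : Filter.Tendsto (fun ℓ:ℕ => 6/((ℓ:ℝ)-1)) Filter.atTop (nhds 0) :=
      Filter.Tendsto.div_atTop tendsto_const_nhds hdenom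
    simpa using tendsto_const_nhds.sub h0
  refine tendsto_of_tendsto_of_tendsto_of_le_of_le' hlowerT hupperT ?_ ?_
  · exact Filter.eventually_atTop.mpr ⟨2, fun ℓ hℓ => hlb ℓ hℓ⟩
  · exact Filter.Eventually.of_forall hub
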